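/- Define c_{110} by the power series expansion -½ ∑_{j=1}^{k-1} log(((1+x)^{1/k} - η^{-j}(1+y)^{1/k})/(1 - η^{-j})) = ∑_{m,n≥0} c_{mn0} x^m y^n. Then c_{110} = -(1/(2k²)) ∑_{j=1}^{k-1} η^{-j}/(1-η^{-j})² = (k²-1)/(24k²). -/

import Mathlib

open Finset

lemma sum_id_cast (n : ℕ) : ∑ i ∈ range n, (i:ℂ) = n*(n-1)/2 := by
  induction n with
  | zero => simp
  | succ n ih => rw [sum_range_succ, ih]; push_cast; ring

lemma sum_sq_cast (n : ℕ) : ∑ i ∈ range n, (i:ℂ)^2 = n*(n-1)*(2*n-1)/6 := by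
  induction n with
  | zero => simp
  | succ n ih => rw [sum_range_succ, ih]; push_cast; ring

lemma gen_id (ζ : ℂ) (k : ℕ) :
    (1 - ζ) * ∑ i ∈ range k, (i:ℂ) * ζ^i
      = (∑ i ∈ range k, ζ^i) - 1 - ((k:ℂ)-1)*ζ^k := by
  induction k with
  | zero => simp
  | succ k ih =>
      rw [sum_range_succ, mul_add, ih, sum_range_succ]
      push_cast; ring

lemma inv_one_sub (ζ : ℂ) (k : ℕ) (h1 : ζ^k = 1) (h2 : ζ ≠ 1) :
    (1-ζ) * ∑ i ∈ range k, (i:ℂ)*ζ^i = -(k:ℂ) := by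
  have hg : ∑ i ∈ range k, ζ^i = 0 := by
    have := geom_sum_eq h2 k
    rw [this, h1, sub_self, zero_div]
  rw [gen_id, hg, h1]; ring

lemma geo_Ico (w : ℂ) (k : ℕ) (hk : 0 < k) (hw : w^k = 1) :
    ∑ j ∈ Ico 1 k, w^j = (if w = 1 then (k:ℂ) else 0) - 1 := by
  have h0 : ∑ j ∈ range k, w^j = (if w = 1 then (k:ℂ) else 0) := by
    split_ifs with h
    · simp [h]
    · rw [geom_sum_eq h k, hw, sub_self, zero_div]
  have : ∑ j ∈ range k, w^j = w^0 + ∑ j ∈ Ico 1 k, w^j := by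
    rw [Finset.range_eq_Ico, Finset.sum_eq_sum_Ico_succ_bot hk]
  rw [this, pow_zero] at h0
  linear_combination h0

lemma main_sum (k : ℕ) (hk : 0 < k) (η : ℂ) (hη : IsPrimitiveRoot η k) :
    ∑ j ∈ Ico 1 k, η ^ (-(j:ℤ)) / (1 - η ^ (-(j:ℤ)))^2 = -((k:ℂ)^2-1)/12 := by
  have hk0 : (k:ℂ) ≠ 0 := Nat.cast_ne_zero.mpr hk.ne'
  -- basic facts about ζ j := η ^ (-j)
  have hζk : ∀ m : ℕ, (η ^ (-(m:ℤ)))^k = 1 := by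
    intro m
    rw [← zpow_natCast (η ^ (-(m:ℤ))) k, ← zpow_mul]
    have : (-(m:ℤ)) * k = (k : ℤ) * (-(m:ℤ)) := by ring
    rw [this, zpow_mul, zpow_natCast, hη.pow_eq_one, one_zpow]
  have hζ1 : ∀ m : ℕ, (η ^ (-(m:ℤ)) = 1 ↔ k ∣ m) := by
    intro m
    rw [hη.zpow_eq_one_iff_dvd, Int.dvd_neg, Int.natCast_dvd_natCast]
  have hne1 : ∀ j ∈ Ico 1 k, η ^ (-(j:ℤ)) ≠ 1 := by
    intro j hj
    rw [Finset.mem_Ico] at hj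
    rw [Ne, hζ1]
    intro hd
    have := Nat.le_of_dvd (by omega) hd
    omega
  have hsub : ∀ j ∈ Ico 1 k, 1 - η ^ (-(j:ℤ)) ≠ 0 := by
    intro j hj
    exact sub_ne_zero.mpr (Ne.symm (hne1 j hj))
  -- rewrite each term using the A-sum
  set A : ℂ → ℂ := fun z => ∑ i ∈ range k, (i:ℂ) * z^i with hA
  have step1 : ∀ j ∈ Ico 1 k,
      η ^ (-(j:ℤ)) / (1 - η ^ (-(j:ℤ)))^2
        = η ^ (-(j:ℤ)) * (A (η ^ (-(j:ℤ))))^2 / (k:ℂ)^2 := by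
    intro j hj
    have hAj := inv_one_sub (η ^ (-(j:ℤ))) k (hζk j) (hne1 j hj)
    rw [div_eq_div_iff (pow_ne_zero 2 (hsub j hj)) (pow_ne_zero 2 hk0)]
    linear_combination (-(η ^ (-(j:ℤ))) * ((1 - η ^ (-(j:ℤ))) * A (η ^ (-(j:ℤ))) - (k:ℂ))) * hAj
  rw [Finset.sum_congr rfl step1, ← Finset.sum_div]
  -- expand the square into a double sum
  have step2 : ∀ j ∈ Ico 1 k,
      η ^ (-(j:ℤ)) * (A (η ^ (-(j:ℤ))))^2
        = ∑ i ∈ range k, ∑ l ∈ range k, (i:ℂ) * (l:ℂ) * (η ^ (-((i+l+1:ℕ):ℤ)))^j := by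
    intro j hj
    have hswap : ∀ a b : ℕ, (η ^ (-(a:ℤ)))^b = (η ^ (-(b:ℤ)))^a := by
      intro a b
      rw [← zpow_natCast (η ^ (-(a:ℤ))) b, ← zpow_mul,
          ← zpow_natCast (η ^ (-(b:ℤ))) a, ← zpow_mul]
      congr 1
      ring
    rw [hA, sq]
    rw [Finset.sum_mul_sum]
    rw [Finset.mul_sum]
    apply Finset.sum_congr rfl
    intro i _
    rw [Finset.mul_sum]
    apply Finset.sum_congr rfl
    intro l _
    rw [← hswap j (i+l+1)]
    have : (η ^ (-(j:ℤ)))^(i+l+1) = (η ^ (-(j:ℤ)))^i * (η ^ (-(j:ℤ)))^l * η ^ (-(j:ℤ)) := by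
      rw [pow_add, pow_add, pow_one]
    rw [this]
    ring
  rw [Finset.sum_congr rfl step2]
  rw [Finset.sum_comm]
  have step3 : ∀ i ∈ range k,
      ∑ j ∈ Ico 1 k, ∑ l ∈ range k, (i:ℂ) * (l:ℂ) * (η ^ (-((i+l+1:ℕ):ℤ)))^j
        = ∑ l ∈ range k, (i:ℂ) * (l:ℂ) * ((if k ∣ (i+l+1) then (k:ℂ) else 0) - 1) := by
    intro i _
    rw [Finset.sum_comm]
    apply Finset.sum_congr rfl
    intro l _
    rw [← Finset.mul_sum, geo_Ico _ k hk (hζk _)]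
    simp only [hζ1]
  rw [Finset.sum_congr rfl step3]
  -- evaluate the if-sums
  have step4 : ∀ i ∈ range k,
      ∑ l ∈ range k, (i:ℂ) * (l:ℂ) * ((if k ∣ (i+l+1) then (k:ℂ) else 0) - 1)
        = (i:ℂ) * ((k:ℂ) - 1 - i) * k - ∑ l ∈ range k, (i:ℂ) * (l:ℂ) := by
    intro i hi
    have hik : i < k := Finset.mem_range.mp hi
    have expand : ∀ l ∈ range k,
        (i:ℂ) * (l:ℂ) * ((if k ∣ (i+l+1) then (k:ℂ) else 0) - 1)
          = (if k ∣ (i+l+1) then ((i:ℂ) * (l:ℂ) * k) else 0) - (i:ℂ) * (l:ℂ) := by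
      intro l _
      split_ifs <;> ring
    rw [Finset.sum_congr rfl expand, Finset.sum_sub_distrib]
    congr 1
    rw [Finset.sum_eq_single (k-1-i)]
    · have hdd : k ∣ i+(k-1-i)+1 := by
        have h' : i+(k-1-i)+1 = k := by omega
        rw [h']
      rw [if_pos hdd]
      have : ((k-1-i : ℕ) : ℂ) = (k:ℂ) - 1 - i := by
        have h1 : ((k-1-i : ℕ) : ℂ) = ((k:ℕ):ℂ) - 1 - (i:ℕ) := by
          rw [Nat.cast_sub (by omega : i ≤ k-1), Nat.cast_sub (by omega : 1 ≤ k)]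
          push_cast
          ring
        exact h1
      rw [this]
    · intro l hl hne
      have hlk : l < k := Finset.mem_range.mp hl
      rw [if_neg]
      intro hd
      have := Nat.eq_of_dvd_of_lt_two_mul (by omega) hd (by omega)
      omega
    · intro habs
      exact absurd (Finset.mem_range.mpr (by omega)) habs
  rw [Finset.sum_congr rfl step4, Finset.sum_sub_distrib]
  have c1 : ∑ i ∈ range k, (i:ℂ) * ((k:ℂ) - 1 - i) * k
      = (k:ℂ) * (((k:ℂ)-1) * ((k:ℂ)*((k:ℂ)-1)/2) - (k:ℂ)*((k:ℂ)-1)*(2*(k:ℂ)-1)/6) := by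
    have : ∀ i ∈ range k, (i:ℂ) * ((k:ℂ) - 1 - i) * k
        = (k:ℂ) * (((k:ℂ)-1) * (i:ℂ)) - (k:ℂ) * ((i:ℂ))^2 := by
      intro i _
      ring
    rw [Finset.sum_congr rfl this, Finset.sum_sub_distrib, ← Finset.mul_sum, ← Finset.mul_sum,
        ← Finset.mul_sum, sum_id_cast, sum_sq_cast]
    ring
  have c2 : ∑ i ∈ range k, ∑ l ∈ range k, (i:ℂ) * (l:ℂ)
      = ((k:ℂ)*((k:ℂ)-1)/2) * ((k:ℂ)*((k:ℂ)-1)/2) := by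
    rw [← Finset.sum_mul_sum, sum_id_cast]
  rw [c1, c2]
  field_simp
  ring

theorem stmt16_aux (k : ℕ) (hk : 0 < k) (η : ℂ) (hη : IsPrimitiveRoot η k)
    (F : ℂ → ℂ → ℂ)
    (hF : ∀ x y, F x y = -(1 / 2) * ∑ j ∈ Finset.Ico 1 k,
        Complex.log (((1 + x) ^ ((k : ℂ)⁻¹) - η ^ (-(j : ℤ)) * (1 + y) ^ ((k : ℂ)⁻¹))
          / (1 - η ^ (-(j : ℤ))))) :
    deriv (fun x => deriv (fun y => F x y) 0) 0
        = -(1 / (2 * (k : ℂ) ^ 2)) *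
            ∑ j ∈ Finset.Ico 1 k, η ^ (-(j : ℤ)) / (1 - η ^ (-(j : ℤ))) ^ 2 := by
  have hk0 : (k:ℂ) ≠ 0 := Nat.cast_ne_zero.mpr hk.ne'
  have hζ1 : ∀ m : ℕ, (η ^ (-(m:ℤ)) = 1 ↔ k ∣ m) := by
    intro m
    rw [hη.zpow_eq_one_iff_dvd, Int.dvd_neg, Int.natCast_dvd_natCast]
  have hsub : ∀ j ∈ Finset.Ico 1 k, 1 - η ^ (-(j:ℤ)) ≠ 0 := by
    intro j hj
    rw [Finset.mem_Ico] at hj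
    rw [sub_ne_zero]
    intro h
    have := (hζ1 j).mp h.symm
    have := Nat.le_of_dvd (by omega) this
    omega
  -- derivative of (1+t)^(1/k) at 0
  have hu : HasDerivAt (fun t : ℂ => (1+t) ^ ((k:ℂ)⁻¹)) ((k:ℂ)⁻¹) 0 := by
    have h1 : HasDerivAt (fun t : ℂ => 1+t) 1 0 := by
      simpa using (hasDerivAt_id (0:ℂ)).const_add (1:ℂ)
    have h2 := h1.cpow_const (c := (k:ℂ)⁻¹)
      (by simpa using Complex.one_mem_slitPlane)
    simpa using h2
  -- the function G : value of inner derivative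
  set G : ℂ → ℂ := fun x => -(1/2) * ∑ j ∈ Finset.Ico 1 k,
      (-(η ^ (-(j:ℤ)) * (k:ℂ)⁻¹) / (1 - η ^ (-(j:ℤ))))
        / (((1+x) ^ ((k:ℂ)⁻¹) - η ^ (-(j:ℤ))) / (1 - η ^ (-(j:ℤ)))) with hG
  -- eventually, all arguments lie in the slit plane
  have hEv : ∀ᶠ x in nhds (0:ℂ), ∀ j ∈ Finset.Ico 1 k,
      ((1+x) ^ ((k:ℂ)⁻¹) - η ^ (-(j:ℤ))) / (1 - η ^ (-(j:ℤ))) ∈ Complex.slitPlane := by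
    rw [Filter.eventually_all_finset]
    intro j hj
    have hc : ContinuousAt (fun x : ℂ =>
        ((1+x) ^ ((k:ℂ)⁻¹) - η ^ (-(j:ℤ))) / (1 - η ^ (-(j:ℤ)))) 0 :=
      (hu.continuousAt.sub continuousAt_const).div_const _
    have hval : ((1+(0:ℂ)) ^ ((k:ℂ)⁻¹) - η ^ (-(j:ℤ))) / (1 - η ^ (-(j:ℤ))) = 1 := by
      rw [add_zero, Complex.one_cpow, div_self (hsub j hj)]
    refine hc.eventually_mem (Complex.isOpen_slitPlane.mem_nhds ?_)
    show ((1+(0:ℂ)) ^ ((k:ℂ)⁻¹) - η ^ (-(j:ℤ))) / (1 - η ^ (-(j:ℤ))) ∈ Complex.slitPlane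
    rw [hval]
    exact Complex.one_mem_slitPlane
  -- inner derivative identity
  have hInner : ∀ x : ℂ, (∀ j ∈ Finset.Ico 1 k,
      ((1+x) ^ ((k:ℂ)⁻¹) - η ^ (-(j:ℤ))) / (1 - η ^ (-(j:ℤ))) ∈ Complex.slitPlane) →
      deriv (fun y => F x y) 0 = G x := by
    intro x hx
    have hd : HasDerivAt (fun y => F x y) (G x) 0 := by
      simp only [hF, hG]
      apply HasDerivAt.const_mul
      apply HasDerivAt.fun_sum
      intro j hj
      have hw : HasDerivAt
          (fun y : ℂ => ((1+x) ^ ((k:ℂ)⁻¹) - η ^ (-(j:ℤ)) * (1+y) ^ ((k:ℂ)⁻¹))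
            / (1 - η ^ (-(j:ℤ))))
          (-(η ^ (-(j:ℤ)) * (k:ℂ)⁻¹) / (1 - η ^ (-(j:ℤ)))) 0 :=
        ((hu.const_mul (η ^ (-(j:ℤ)))).const_sub ((1+x) ^ ((k:ℂ)⁻¹))).div_const _
      have hmem : ((1+x) ^ ((k:ℂ)⁻¹) - η ^ (-(j:ℤ)) * (1+(0:ℂ)) ^ ((k:ℂ)⁻¹))
          / (1 - η ^ (-(j:ℤ))) ∈ Complex.slitPlane := by
        simpa [Complex.one_cpow] using hx j hj
      have := hw.clog hmem
      refine this.congr_deriv ?_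
      simp [Complex.one_cpow]
    exact hd.deriv
  have hEvEq : (fun x => deriv (fun y => F x y) 0) =ᶠ[nhds (0:ℂ)] G :=
    hEv.mono (fun x hx => hInner x hx)
  rw [Filter.EventuallyEq.deriv_eq hEvEq]
  -- outer derivative
  have hD : HasDerivAt G (-(1/2) * ∑ j ∈ Finset.Ico 1 k,
      η ^ (-(j:ℤ)) * ((k:ℂ)⁻¹)^2 / (1 - η ^ (-(j:ℤ)))^2) 0 := by
    rw [hG]
    apply HasDerivAt.const_mul
    apply HasDerivAt.fun_sum
    intro j hj
    have hv : HasDerivAt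
        (fun x : ℂ => ((1+x) ^ ((k:ℂ)⁻¹) - η ^ (-(j:ℤ))) / (1 - η ^ (-(j:ℤ))))
        ((k:ℂ)⁻¹ / (1 - η ^ (-(j:ℤ)))) 0 :=
      (hu.sub_const (η ^ (-(j:ℤ)))).div_const _
    have hv0 : ((1+(0:ℂ)) ^ ((k:ℂ)⁻¹) - η ^ (-(j:ℤ))) / (1 - η ^ (-(j:ℤ))) = 1 := by
      rw [add_zero, Complex.one_cpow, div_self (hsub j hj)]
    have hne : ((1+(0:ℂ)) ^ ((k:ℂ)⁻¹) - η ^ (-(j:ℤ))) / (1 - η ^ (-(j:ℤ))) ≠ 0 := by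
      rw [hv0]; exact one_ne_zero
    have := (hasDerivAt_const (0:ℂ)
        (-(η ^ (-(j:ℤ)) * (k:ℂ)⁻¹) / (1 - η ^ (-(j:ℤ))))).fun_div hv hne
    refine this.congr_deriv ?_
    rw [hv0]
    field_simp [hsub j hj]
    ring
  rw [hD.deriv, Finset.mul_sum, Finset.mul_sum]
  apply Finset.sum_congr rfl
  intro j hj
  field_simp

/-- The coefficient `c₁₁₀` of `xy` (equivalently, the mixed partial `∂²/∂x∂y` at `x = y = 0`)
of `-½ ∑_{j=1}^{k-1} log(((1+x)^{1/k} - η^{-j}(1+y)^{1/k})/(1-η^{-j}))` equals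
`-(1/(2k²)) ∑_{j=1}^{k-1} η^{-j}/(1-η^{-j})² = (k²-1)/(24k²)`. -/
theorem stmt16 (k : ℕ) (hk : 0 < k) (η : ℂ) (hη : IsPrimitiveRoot η k)
    (F : ℂ → ℂ → ℂ)
    (hF : ∀ x y, F x y = -(1 / 2) * ∑ j ∈ Finset.Ico 1 k,
        Complex.log (((1 + x) ^ ((k : ℂ)⁻¹) - η ^ (-(j : ℤ)) * (1 + y) ^ ((k : ℂ)⁻¹))
          / (1 - η ^ (-(j : ℤ))))) :
    deriv (fun x => deriv (fun y => F x y) 0) 0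
        = -(1 / (2 * (k : ℂ) ^ 2)) *
            ∑ j ∈ Finset.Ico 1 k, η ^ (-(j : ℤ)) / (1 - η ^ (-(j : ℤ))) ^ 2 ∧
    deriv (fun x => deriv (fun y => F x y) 0) 0
        = ((k : ℂ) ^ 2 - 1) / (24 * (k : ℂ) ^ 2) := by
  have hk0 : (k:ℂ) ≠ 0 := Nat.cast_ne_zero.mpr hk.ne'
  have h1 := stmt16_aux k hk η hη F hF
  refine ⟨h1, ?_⟩
  rw [h1, main_sum k hk η hη]
  rw [neg_div, mul_neg, neg_mul, neg_neg, div_mul_div_comm, one_mul]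
  rw [div_eq_div_iff
    (mul_ne_zero (mul_ne_zero two_ne_zero (pow_ne_zero 2 hk0)) (by norm_num : (12:ℂ) ≠ 0))
    (mul_ne_zero (by norm_num : (24:ℂ) ≠ 0) (pow_ne_zero 2 hk0))]
  ring
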